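/- Let R be a commutative ring, s an even positive integer, and b_0,...,b_{s-1} ∈ R with b_i = b_{s-i} for all 1 ≤ i ≤ s-1. Then there exists u ∈ R such that the determinant of the circulant matrix C(b_0,...,b_{s-1}) equals (∑_{i=0}^{s-1} b_i) · (∑_{i=0}^{s-1} (-1)^i b_i) · u². -/

import Mathlib

open AddMonoidAlgebra Finsupp Finset Polynomial

noncomputable section Helper

open Fin.CommRing

variable (R : Type*) [CommRing R] (m : ℕ) [NeZero (2 * m)]

abbrev AA := AddMonoidAlgebra R (Fin (2 * m))

def Ee (z : ℤ) : AA R m := AddMonoidAlgebra.single (z : Fin (2 * m)) 1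

variable {R m}

lemma cast2m : (((2 * m : ℕ) : ℤ) : Fin (2*m)) = 0 := by
  have h : ((2*m : ℕ) : Fin (2*m)) = 0 := Fin.natCast_self _
  exact_mod_cast h

lemma Ee_mul (a b : ℤ) : Ee R m a * Ee R m b = Ee R m (a + b) := by
  simp [Ee, AddMonoidAlgebra.single_mul_single]

lemma Ee_zero : Ee R m 0 = 1 := by
  simp [Ee, AddMonoidAlgebra.one_def]

lemma Ee_period (a : ℤ) : Ee R m (a + 2 * m) = Ee R m a := by
  unfold Ee
  congr 1
  have : ((a + 2*m : ℤ) : Fin (2*m)) = ((a:ℤ) : Fin (2*m)) + (((2*m:ℕ) : ℤ) : Fin (2*m)) := by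
    push_cast; ring
  rw [this, cast2m, add_zero]


lemma Ee_intCast_natCast (n : ℕ) : Ee R m ((n : ℤ)) = AddMonoidAlgebra.single ((n : Fin (2*m))) 1 := by
  unfold Ee
  norm_cast

def Yy (R : Type*) [CommRing R] (m : ℕ) [NeZero (2*m)] : AA R m := Ee R m 1 + Ee R m (-1)

def Psi (R : Type*) [CommRing R] (m : ℕ) [NeZero (2*m)] : AA R m :=
  ∑ k ∈ Finset.range m, Ee R m (2 * k)

/-- Chebyshev-U-like polynomials: `vp n` evaluated at `Y` gives `∑_{k ≤ n} X^(n-2k)`. -/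
def vp (R : Type*) [CommRing R] : ℕ → Polynomial R
  | 0 => 1
  | 1 => Polynomial.X
  | (n+2) => Polynomial.X * vp R (n+1) - vp R n

/-- Dickson-like: `tp n` at `Y` gives `X^n + X^(-n)`. -/
def tp (R : Type*) [CommRing R] : ℕ → Polynomial R
  | 0 => Polynomial.C 2
  | 1 => Polynomial.X
  | (n+2) => Polynomial.X * tp R (n+1) - tp R n

lemma aeval_X_Yy : Polynomial.aeval (Yy R m) (Polynomial.X : Polynomial R) = Yy R m := by
  simp

lemma Yy_mul_Ee (a : ℤ) : Yy R m * Ee R m a = Ee R m (a+1) + Ee R m (a-1) := by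
  unfold Yy
  rw [add_mul, Ee_mul, Ee_mul]
  ring_nf

lemma aeval_tp (n : ℕ) : Polynomial.aeval (Yy R m) (tp R n) = Ee R m n + Ee R m (-n) := by
  induction n using Nat.strong_induction_on with
  | _ n ih =>
    match n with
    | 0 =>
      simp only [Nat.cast_zero, neg_zero, Ee_zero, tp, Polynomial.aeval_C]
      rw [map_ofNat]
      norm_num
    | 1 => simp [tp, Yy]
    | (n+2) =>
      rw [tp]
      simp only [map_sub, map_mul, aeval_X_Yy, ih (n+1) (by omega), ih n (by omega)]
      rw [mul_add, Yy_mul_Ee, Yy_mul_Ee]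
      push_cast
      have e1 : ((n:ℤ) + 1 + 1) = ((n:ℤ)+2) := by ring
      have e2 : ((n:ℤ) + 1 - 1) = (n:ℤ) := by ring
      have e3 : (-((n:ℤ) + 1) + 1) = -(n:ℤ) := by ring
      have e4 : (-((n:ℤ) + 1) - 1) = -((n:ℤ)+2) := by ring
      rw [e1, e2, e3, e4]
      ring

def Vsum (R : Type*) [CommRing R] (m : ℕ) [NeZero (2*m)] (n : ℕ) : AA R m :=
  ∑ k ∈ Finset.range (n+1), Ee R m ((n : ℤ) - 2 * k)

lemma Yy_mul_Vsum (n : ℕ) :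
    Yy R m * Vsum R m (n+1) = Vsum R m (n+2) + Vsum R m n := by
  unfold Vsum
  rw [Finset.mul_sum]
  have step : ∀ k ∈ Finset.range (n+2), Yy R m * Ee R m (((n+1:ℕ):ℤ) - 2*k)
      = Ee R m (((n+2:ℕ):ℤ) - 2*k) + Ee R m ((n:ℤ) - 2*k) := by
    intro k _
    rw [Yy_mul_Ee]
    congr 1 <;> congr 1 <;> push_cast <;> ring
  rw [Finset.sum_congr rfl step, Finset.sum_add_distrib]
  rw [Finset.sum_range_succ (fun k => Ee R m ((n:ℤ) - 2*k)) (n+1)]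
  have e5 : (∑ k ∈ Finset.range (n+2+1), Ee R m (((n+2:ℕ):ℤ) - 2*k))
      = (∑ k ∈ Finset.range (n+2), Ee R m (((n+2:ℕ):ℤ) - 2*k)) + Ee R m ((n:ℤ) - 2*((n+1:ℕ):ℤ)) := by
    rw [Finset.sum_range_succ]
    congr 1
    congr 1
    push_cast
    ring
  rw [e5]
  abel

lemma aeval_vp (n : ℕ) : Polynomial.aeval (Yy R m) (vp R n) = Vsum R m n := by
  induction n using Nat.strong_induction_on with
  | _ n ih =>
    match n with
    | 0 => simp [vp, Vsum, Ee_zero]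
    | 1 =>
      rw [vp, aeval_X_Yy]
      unfold Vsum
      rw [Finset.sum_range_succ, Finset.sum_range_succ, Finset.sum_range_zero]
      unfold Yy
      norm_num
    | (n+2) =>
      rw [vp]
      simp only [map_sub, map_mul, aeval_X_Yy, ih (n+1) (by omega), ih n (by omega)]
      rw [Yy_mul_Vsum]
      ring


lemma hm_pos (m : ℕ) [NeZero (2*m)] : 1 ≤ m := by
  rcases Nat.eq_zero_or_pos m with h | h
  · exact absurd (by omega) (NeZero.ne (2*m))
  · exact h

lemma cast2m'' : (2 : Fin (2*m)) * ((m : ℕ) : Fin (2*m)) = 0 := by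
  have h := Fin.natCast_self (2*m)
  push_cast at h
  exact h

lemma Ee_congr {a b : ℤ} (h : 2*(m:ℤ) ∣ (a-b)) : Ee R m a = Ee R m b := by
  obtain ⟨t, ht⟩ := h
  unfold Ee
  congr 1
  have ha : a = b + 2*(m:ℤ)*t := by linarith
  rw [ha]
  push_cast
  simp [cast2m'']

lemma psi_eq : Ee R m (m-1) * Vsum R m (m-1) = Psi R m := by
  unfold Vsum Psi
  rw [Finset.mul_sum]
  have hm1 : m - 1 + 1 = m := by have := hm_pos m; omega
  rw [hm1]
  have step : ∀ k ∈ Finset.range m,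
      Ee R m (m-1) * Ee R m (((m-1:ℕ):ℤ) - 2*k) = Ee R m (2*((m-1-k:ℕ):ℤ)) := by
    intro k hk
    rw [Finset.mem_range] at hk
    rw [Ee_mul]
    congr 1
    omega
  rw [Finset.sum_congr rfl step]
  exact Finset.sum_range_reflect (fun k => Ee R m (2*(k:ℤ))) m

lemma vsum_eq : Vsum R m (m-1) = Ee R m (m+1) * Psi R m := by
  have h := psi_eq (R := R) (m := m)
  have h2 : Ee R m (m+1) * (Ee R m (m-1) * Vsum R m (m-1)) = Ee R m (m+1) * Psi R m := by rw [h]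
  rw [← mul_assoc, Ee_mul] at h2
  have e : Ee R m ((m:ℤ)+1 + ((m:ℤ)-1)) = 1 := by
    rw [← Ee_zero (R := R) (m := m)]
    apply Ee_congr
    exact ⟨1, by ring⟩
  rw [e, one_mul] at h2
  exact h2

lemma Ee_m_mul_psi : Ee R m m * Psi R m
    = Ee R m m + ∑ k ∈ Finset.range (m-1), Ee R m ((m:ℤ) - 2 - 2*k) := by
  have hm1 : 1 ≤ m := hm_pos m
  have h : Ee R m m * Psi R m = Ee R m (2*m-1) * Vsum R m (m-1) := by
    rw [← psi_eq, ← mul_assoc, Ee_mul]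
    congr 2
    ring
  rw [h]
  unfold Vsum
  rw [Finset.mul_sum]
  have hm1' : m - 1 + 1 = m := by omega
  rw [hm1']
  have step : ∀ k ∈ Finset.range m,
      Ee R m (2*m-1) * Ee R m (((m-1:ℕ):ℤ) - 2*k) = Ee R m ((m:ℤ) - 2 - 2*k) := by
    intro k hk
    rw [Finset.mem_range] at hk
    rw [Ee_mul]
    apply Ee_congr
    exact ⟨1, by push_cast [Nat.cast_sub hm1]; ring⟩
  rw [Finset.sum_congr rfl step]
  have hs := Finset.sum_range_succ (fun k => Ee R m ((m:ℤ) - 2 - 2*(k:ℤ))) (m-1)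
  rw [hm1'] at hs
  rw [hs]
  have e : Ee R m ((m:ℤ) - 2 - 2*((m-1:ℕ):ℤ)) = Ee R m m := by
    apply Ee_congr
    exact ⟨-1, by push_cast [Nat.cast_sub hm1]; ring⟩
  rw [e]
  ring


lemma SS_aeval : ∃ g : Polynomial R,
    (∑ k ∈ Finset.range (m-1), Ee R m ((m:ℤ) - 2 - 2*k)) = Polynomial.aeval (Yy R m) g := by
  rcases le_or_gt m 1 with h | h
  · refine ⟨0, ?_⟩
    have : m - 1 = 0 := by omega
    rw [this]
    simp
  · refine ⟨vp R (m-2), ?_⟩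
    rw [aeval_vp]
    unfold Vsum
    have e : m - 2 + 1 = m - 1 := by omega
    rw [e]
    apply Finset.sum_congr rfl
    intro k _
    congr 1
    omega

lemma Ee_m_eq : ∃ g : Polynomial R,
    Ee R m m = Ee R m m * Psi R m - Polynomial.aeval (Yy R m) g := by
  obtain ⟨g, hg⟩ := SS_aeval (R := R) (m := m)
  refine ⟨g, ?_⟩
  rw [Ee_m_mul_psi, ← hg]
  ring

lemma psi_X2 : Ee R m 2 * Psi R m = Psi R m := by
  unfold Psi
  rw [Finset.mul_sum]
  have step : ∀ k ∈ Finset.range m,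
      Ee R m 2 * Ee R m (2*k) = Ee R m (2*((k+1:ℕ):ℤ)) := by
    intro k _
    rw [Ee_mul]
    congr 1
    push_cast
    ring
  rw [Finset.sum_congr rfl step]
  have h1 := Finset.sum_range_succ' (fun k => Ee R m (2*(k:ℤ))) m
  have h2 := Finset.sum_range_succ (fun k => Ee R m (2*(k:ℤ))) m
  have e : Ee R m (2*((m:ℕ):ℤ)) = Ee R m (2*((0:ℕ):ℤ)) := by
    apply Ee_congr
    refine ⟨1, by push_cast; ring⟩
  rw [h2, e] at h1
  push_cast at h1 ⊢
  exact (add_right_cancel h1).symm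

lemma Ee_nat_mul_psi (n : ℕ) : Ee R m (n : ℤ) * Psi R m
    = if n % 2 = 0 then Psi R m else Ee R m 1 * Psi R m := by
  induction n with
  | zero => simp [Ee_zero]
  | succ n ih =>
    have e : Ee R m ((n+1 : ℕ) : ℤ) = Ee R m 1 * Ee R m n := by
      rw [Ee_mul]; congr 1; push_cast; ring
    rw [e, mul_assoc, ih]
    rcases Nat.even_or_odd n with he | ho
    · have h0 : n % 2 = 0 := Nat.even_iff.mp he
      have h1 : (n+1) % 2 = 1 := by omega
      rw [h0, h1]
      norm_num
    · have h0 : n % 2 = 1 := Nat.odd_iff.mp ho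
      have h1 : (n+1) % 2 = 0 := by omega
      rw [h0, h1]
      norm_num
      rw [← mul_assoc, Ee_mul]
      norm_num [psi_X2]

lemma a_eq_sum (a : AA R m) : a = ∑ j : Fin (2*m), AddMonoidAlgebra.single j (a.coeff j) := by
  ext x
  rw [AddMonoidAlgebra.coeff_sum, Finsupp.finset_sum_apply]
  simp [Finsupp.single_apply]

lemma single_eq_smul_Ee (j : Fin (2*m)) (r : R) :
    AddMonoidAlgebra.single j r = r • Ee R m (j.val) := by
  rw [Ee_intCast_natCast, Fin.cast_val_eq_self]
  rw [AddMonoidAlgebra.smul_single]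
  simp

def evenSum (m : ℕ) (a : Fin (2*m) → R) : R :=
  ∑ j ∈ Finset.univ.filter (fun j : Fin (2*m) => j.val % 2 = 0), a j

def oddSum (m : ℕ) (a : Fin (2*m) → R) : R :=
  ∑ j ∈ Finset.univ.filter (fun j : Fin (2*m) => ¬ (j.val % 2 = 0)), a j

lemma mul_psi (a : AA R m) : a * Psi R m
    = (evenSum m a.coeff) • Psi R m + (oddSum m a.coeff) • (Ee R m 1 * Psi R m) := by
  conv_lhs => rw [a_eq_sum a]
  rw [Finset.sum_mul]
  have step : ∀ j ∈ Finset.univ (α := Fin (2*m)),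
      AddMonoidAlgebra.single j (a.coeff j) * Psi R m
      = if j.val % 2 = 0 then (a.coeff j) • Psi R m else (a.coeff j) • (Ee R m 1 * Psi R m) := by
    intro j _
    rw [single_eq_smul_Ee, smul_mul_assoc, Ee_nat_mul_psi]
    split_ifs <;> rfl
  rw [Finset.sum_congr rfl step, Finset.sum_ite]
  unfold evenSum oddSum
  rw [Finset.sum_smul, Finset.sum_smul]


def fA (m : ℕ) [NeZero (2*m)] (b : Fin (2*m) → R) : AA R m :=
  ∑ j : Fin (2*m), AddMonoidAlgebra.single j (b j)

lemma fA_mul_apply (b : Fin (2*m) → R) (a : AA R m) (x : Fin (2*m)) :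
    (fA m b * a).coeff x = ∑ j : Fin (2*m), b (x - j) * a.coeff j := by
  unfold fA
  rw [Finset.sum_mul, AddMonoidAlgebra.coeff_sum, Finsupp.finset_sum_apply]
  have step : ∀ j ∈ Finset.univ (α := Fin (2*m)),
      (AddMonoidAlgebra.single j (b j) * a).coeff x = b j * a.coeff (x - j) := by
    intro j _
    rw [AddMonoidAlgebra.coeff_single_mul_apply]
    rw [neg_add_eq_sub]
  rw [Finset.sum_congr rfl step]
  exact Fintype.sum_equiv (Equiv.subLeft x) _ _ (by
    intro j
    simp [Equiv.subLeft, sub_sub_cancel])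

lemma fA_partition (b : Fin (2*m) → R) (hb : ∀ i : Fin (2*m), b (-i) = b i) :
    fA m b = (b 0) • (1 : AA R m) + (b ((m:ℕ) : Fin (2*m))) • Ee R m m
      + ∑ j ∈ Finset.Ico 1 m, (b ((j:ℕ) : Fin (2*m))) • (Ee R m j + Ee R m (-(j:ℤ))) := by
  have hm1 : 1 ≤ m := hm_pos m
  set F : ℕ → AA R m := fun j => (b ((j : Fin (2*m)))) • Ee R m j with hF
  have h0 : fA m b = ∑ j ∈ Finset.range (2*m), F j := by
    unfold fA
    rw [← Fin.sum_univ_eq_sum_range]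
    apply Finset.sum_congr rfl
    intro j _
    rw [hF]
    simp only [Fin.cast_val_eq_self]
    exact single_eq_smul_Ee j (b j)
  rw [h0]
  rw [Finset.range_eq_Ico]
  rw [Finset.sum_eq_sum_Ico_succ_bot (by omega : 0 < 2*m) F]
  have hsplit : ∑ j ∈ Finset.Ico 1 (2*m), F j
      = (∑ j ∈ Finset.Ico 1 (m+1), F j) + ∑ j ∈ Finset.Ico (m+1) (2*m), F j := by
    rw [Finset.sum_Ico_consecutive]
    · omega
    · omega
  have htop : ∑ j ∈ Finset.Ico 1 (m+1), F j = (∑ j ∈ Finset.Ico 1 m, F j) + F m :=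
    Finset.sum_Ico_succ_top (by omega) F
  have hrefl : ∑ j ∈ Finset.Ico (m+1) (2*m), F j = ∑ j ∈ Finset.Ico 1 m, F (2*m - j) :=
    Finset.sum_bij' (fun j _ => 2*m - j) (fun j _ => 2*m - j)
      (fun a ha => by rw [Finset.mem_Ico] at *; omega)
      (fun a ha => by rw [Finset.mem_Ico] at *; omega)
      (fun a ha => by rw [Finset.mem_Ico] at ha; omega)
      (fun a ha => by rw [Finset.mem_Ico] at ha; omega)
      (fun a ha => by rw [Finset.mem_Ico] at ha; congr 1; omega)
  have hpair : ∀ j ∈ Finset.Ico 1 m, F j + F (2*m - j)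
      = (b ((j:ℕ) : Fin (2*m))) • (Ee R m j + Ee R m (-(j:ℤ))) := by
    intro j hj
    rw [Finset.mem_Ico] at hj
    rw [hF]
    simp only
    have h2 : ((j:ℕ) : Fin (2*m)) + (((2*m - j : ℕ)) : Fin (2*m)) = 0 := by
      rw [← Nat.cast_add]
      have e : j + (2*m - j) = 2*m := by omega
      rw [e]
      exact Fin.natCast_self (2*m)
    have hbj : b (((2*m - j : ℕ)) : Fin (2*m)) = b ((j : ℕ) : Fin (2*m)) := by
      rw [eq_neg_of_add_eq_zero_right h2, hb]
    have hEe : Ee R m ((2*m - j : ℕ)) = Ee R m (-(j:ℤ)) := by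
      apply Ee_congr
      refine ⟨1, by push_cast [Nat.cast_sub (by omega : j ≤ 2*m)]; ring⟩
    rw [hbj, hEe, smul_add]
  have hmerge : (∑ j ∈ Finset.Ico 1 m, F j) + (∑ j ∈ Finset.Ico 1 m, F (2*m - j))
      = ∑ j ∈ Finset.Ico 1 m, (b ((j:ℕ) : Fin (2*m))) • (Ee R m j + Ee R m (-(j:ℤ))) := by
    rw [← Finset.sum_add_distrib]
    exact Finset.sum_congr rfl hpair
  have hF0 : F 0 = (b 0) • (1 : AA R m) := by
    rw [hF]
    simp only [Nat.cast_zero, Ee_zero]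
  have hFm : F m = (b ((m:ℕ) : Fin (2*m))) • Ee R m m := rfl
  rw [hsplit, hrefl, htop]
  rw [add_right_comm (∑ j ∈ Finset.Ico 1 m, F j) (F m), hmerge, hF0, hFm]
  abel


lemma fA_decomp (b : Fin (2*m) → R) (hb : ∀ i : Fin (2*m), b (-i) = b i) :
    ∃ h : Polynomial R, ∃ c : AA R m,
      fA m b = Polynomial.aeval (Yy R m) h + c * Psi R m := by
  obtain ⟨gm, hgm⟩ := Ee_m_eq (R := R) (m := m)
  refine ⟨(b 0) • 1 + (∑ j ∈ Finset.Ico 1 m, (b ((j:ℕ) : Fin (2*m))) • tp R j)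
      - (b ((m:ℕ) : Fin (2*m))) • gm,
    (b ((m:ℕ) : Fin (2*m))) • Ee R m m, ?_⟩
  have key : (b ((m:ℕ) : Fin (2*m))) • Ee R m m
      = ((b ((m:ℕ) : Fin (2*m))) • Ee R m m) * Psi R m
        - (b ((m:ℕ) : Fin (2*m))) • Polynomial.aeval (Yy R m) gm := by
    rw [smul_mul_assoc, ← smul_sub, ← hgm]
  conv_lhs => rw [fA_partition b hb, key]
  simp only [map_add, map_sub, map_smul, map_sum, map_one, aeval_tp]
  abel

lemma vp_deg [Nontrivial R] (n : ℕ) : (vp R n).Monic ∧ (vp R n).degree = (n : ℕ) := by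
  induction n using Nat.strong_induction_on with
  | _ n ih =>
    match n with
    | 0 => exact ⟨Polynomial.monic_one, Polynomial.degree_one⟩
    | 1 => exact ⟨Polynomial.monic_X, Polynomial.degree_X⟩
    | (n+2) =>
      obtain ⟨h1m, h1d⟩ := ih (n+1) (by omega)
      obtain ⟨h0m, h0d⟩ := ih n (by omega)
      have hq : (Polynomial.X * vp R (n+1)).Monic := Polynomial.monic_X.mul h1m
      have hqd : (Polynomial.X * vp R (n+1)).degree = ((n+2 : ℕ) : WithBot ℕ) := by
        rw [h1m.degree_mul, Polynomial.degree_X, h1d]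
        rw [show ((n+2:ℕ) : WithBot ℕ) = ((1 : ℕ) : WithBot ℕ) + ((n+1:ℕ) : WithBot ℕ) by
          rw [← Nat.cast_add]; congr 1; omega]
        norm_num
      have hlt : (-(vp R n)).degree < (Polynomial.X * vp R (n+1)).degree := by
        rw [Polynomial.degree_neg, h0d, hqd]
        exact_mod_cast Nat.lt_succ_of_lt (Nat.lt_succ_self n)
      constructor
      · rw [vp, sub_eq_add_neg]
        exact hq.add_of_left hlt
      · rw [vp, sub_eq_add_neg, Polynomial.degree_add_eq_left_of_degree_lt hlt, hqd]

lemma vp_monic (n : ℕ) : (vp R n).Monic ∧ (vp R n).degree ≤ (n : ℕ) := by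
  cases subsingleton_or_nontrivial R with
  | inl h =>
    refine ⟨Polynomial.monic_of_subsingleton _, ?_⟩
    have h0 : vp R n = 0 := Subsingleton.elim _ _
    rw [h0, Polynomial.degree_zero]
    exact bot_le
  | inr h =>
    obtain ⟨h1, h2⟩ := vp_deg (R := R) n
    exact ⟨h1, le_of_eq h2⟩

lemma aeval_lowdeg (r : Polynomial R) (hr : r.degree < ((m-1 : ℕ) : WithBot ℕ)) :
    Polynomial.aeval (Yy R m) r
      = ∑ k ∈ Finset.range (m-1), r.coeff k • (Yy R m)^k := by
  by_cases h0 : r = 0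
  · simp [h0]
  · have hnd : r.natDegree < m - 1 := by
      rwa [Polynomial.natDegree_lt_iff_degree_lt h0]
    exact Polynomial.aeval_eq_sum_range' hnd (Yy R m)

lemma aeval_psi_decomp (g : Polynomial R) :
    ∃ c : AA R m, Polynomial.aeval (Yy R m) g
      = (∑ k ∈ Finset.range (m-1), (g %ₘ (vp R (m-1))).coeff k • (Yy R m)^k) + c * Psi R m := by
  cases subsingleton_or_nontrivial R with
  | inl hss => exact ⟨0, Subsingleton.elim _ _⟩
  | inr hnt =>
  obtain ⟨hmon, hdeg⟩ := vp_monic (R := R) (m-1)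
  refine ⟨Ee R m (m+1) * Polynomial.aeval (Yy R m) (g /ₘ (vp R (m-1))), ?_⟩
  conv_lhs => rw [← Polynomial.modByMonic_add_div g (vp R (m-1))]
  rw [map_add, map_mul, aeval_vp, vsum_eq]
  rw [aeval_lowdeg _ (lt_of_lt_of_le (Polynomial.degree_modByMonic_lt g hmon) hdeg)]
  ring

def Jsp (R : Type*) [CommRing R] (m : ℕ) [NeZero (2*m)] : Submodule R (AA R m) :=
  Submodule.span R ({Psi R m, Ee R m 1 * Psi R m} : Set (AA R m))

lemma mul_psi_mem (a : AA R m) : a * Psi R m ∈ Jsp R m := by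
  rw [mul_psi a]
  refine Submodule.add_mem _ (Submodule.smul_mem _ _ ?_) (Submodule.smul_mem _ _ ?_)
  · exact Submodule.subset_span (by simp)
  · exact Submodule.subset_span (by simp)

lemma X2_eq : Ee R m 2 = Ee R m 1 * Yy R m - 1 := by
  unfold Yy
  rw [mul_add, Ee_mul, Ee_mul]
  norm_num [Ee_zero]

lemma Ee_nat_rep (n : ℕ) : ∃ g₁ g₂ : Polynomial R,
    Ee R m n = Ee R m 1 * Polynomial.aeval (Yy R m) g₁ + Polynomial.aeval (Yy R m) g₂ := by
  induction n with
  | zero => exact ⟨0, 1, by simp [Ee_zero]⟩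
  | succ n ih =>
    obtain ⟨g₁, g₂, hg⟩ := ih
    refine ⟨g₂ + Polynomial.X * g₁, -g₁, ?_⟩
    have e : Ee R m ((n+1 : ℕ) : ℤ) = Ee R m 1 * Ee R m n := by
      rw [Ee_mul]; congr 1; push_cast; ring
    rw [e, hg]
    have e2 : Ee R m 1 * (Ee R m 1 * Polynomial.aeval (Yy R m) g₁)
        = (Ee R m 1 * Yy R m - 1) * Polynomial.aeval (Yy R m) g₁ := by
      rw [← X2_eq, ← mul_assoc, Ee_mul]
      norm_num
    rw [mul_add, e2]
    simp only [map_add, map_mul, map_neg, aeval_X_Yy]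
    ring


def colv (R : Type*) [CommRing R] (m : ℕ) [NeZero (2*m)] :
    (Fin 2 ⊕ (Fin (m-1) × Fin 2)) → AA R m :=
  Sum.elim (fun e => ![Psi R m, Ee R m 1 * Psi R m] e)
           (fun p => ![(1 : AA R m), Ee R m 1] p.2 * (Yy R m)^(p.1 : ℕ))

lemma Jsp_le_span : Jsp R m ≤ Submodule.span R (Set.range (colv R m)) := by
  unfold Jsp
  apply Submodule.span_le.mpr
  intro x hx
  rcases hx with h | h
  · exact Submodule.subset_span ⟨Sum.inl 0, by simp [colv, h]⟩
  · simp only [Set.mem_singleton_iff] at h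
    exact Submodule.subset_span ⟨Sum.inl 1, by simp [colv, h]⟩

lemma aeval_mem_span (g : Polynomial R) (ε : Fin 2) :
    ![(1 : AA R m), Ee R m 1] ε * Polynomial.aeval (Yy R m) g
      ∈ Submodule.span R (Set.range (colv R m)) := by
  obtain ⟨c, hc⟩ := aeval_psi_decomp (m := m) g
  rw [hc, mul_add, Finset.mul_sum]
  refine Submodule.add_mem _ (Submodule.sum_mem _ ?_) ?_
  · intro k hk
    rw [mul_smul_comm]
    refine Submodule.smul_mem _ _ (Submodule.subset_span ⟨Sum.inr (⟨k, Finset.mem_range.mp hk⟩, ε), rfl⟩)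
  · rw [← mul_assoc]
    exact Jsp_le_span (mul_psi_mem _)

lemma aeval_mem_span0 (g : Polynomial R) :
    Polynomial.aeval (Yy R m) g ∈ Submodule.span R (Set.range (colv R m)) := by
  have h := aeval_mem_span (m := m) g 0
  simpa using h

lemma aeval_mem_span1 (g : Polynomial R) :
    Ee R m 1 * Polynomial.aeval (Yy R m) g ∈ Submodule.span R (Set.range (colv R m)) := by
  have h := aeval_mem_span (m := m) g 1
  simpa using h

lemma span_top : Submodule.span R (Set.range (colv R m)) = ⊤ := by
  rw [Submodule.eq_top_iff']
  intro a
  have ha := a_eq_sum a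
  rw [ha]
  apply Submodule.sum_mem
  intro j _
  rw [single_eq_smul_Ee]
  apply Submodule.smul_mem
  obtain ⟨g₁, g₂, hg⟩ := Ee_nat_rep (R := R) (m := m) (j.val)
  rw [hg]
  exact Submodule.add_mem _ (aeval_mem_span1 g₁) (aeval_mem_span0 g₂)

lemma fA_apply (b : Fin (2*m) → R) (x : Fin (2*m)) : (fA m b).coeff x = b x := by
  unfold fA
  rw [AddMonoidAlgebra.coeff_sum, Finsupp.finset_sum_apply]
  simp [Finsupp.single_apply]

end Helper
theorem stmt_5 (R : Type*) [CommRing R] (s : ℕ) (hs : 0 < s) (hse : Even s)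
    (b : Fin s → R) (hb : ∀ i : Fin s, b (-i) = b i) :
    ∃ u : R,
      Matrix.det (Matrix.of fun i j : Fin s => b (j - i))
        = (∑ i : Fin s, b i) * (∑ i : Fin s, (-1) ^ (i : ℕ) * b i) * u ^ 2 := by
  obtain ⟨m, rfl⟩ : ∃ m, s = 2 * m := ⟨s/2, by rcases hse with ⟨t, ht⟩; omega⟩
  haveI : NeZero (2*m) := ⟨by omega⟩
  classical
  set p := evenSum m b with hp'
  set q := oddSum m b with hq'
  obtain ⟨hp, c, hfa⟩ := fA_decomp b hb
  set Hm : Matrix (Fin (m-1)) (Fin (m-1)) R :=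
    Matrix.of (fun k i => ((hp * Polynomial.X^(i:ℕ)) %ₘ (vp R (m-1))).coeff k) with hHm
  -- coefficient identification
  have hfacoe1 : evenSum m (fA m b).coeff = p := by
    rw [hp']; unfold evenSum; exact Finset.sum_congr rfl fun j _ => fA_apply b j
  have hfacoe2 : oddSum m (fA m b).coeff = q := by
    rw [hq']; unfold oddSum; exact Finset.sum_congr rfl fun j _ => fA_apply b j
  -- column identities
  have hcol0 : fA m b * colv R m (Sum.inl 0)
      = p • colv R m (Sum.inl 0) + q • colv R m (Sum.inl 1) := by
    simp only [colv, Sum.elim_inl, Matrix.cons_val_zero, Matrix.cons_val_one, Matrix.head_cons]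
    rw [mul_psi (fA m b), hfacoe1, hfacoe2]
  have hXXpsi : Ee R m 1 * (Ee R m 1 * Psi R m) = Psi R m := by
    rw [← mul_assoc, Ee_mul]
    norm_num [psi_X2]
  have hcol1 : fA m b * colv R m (Sum.inl 1)
      = q • colv R m (Sum.inl 0) + p • colv R m (Sum.inl 1) := by
    simp only [colv, Sum.elim_inl, Matrix.cons_val_zero, Matrix.cons_val_one, Matrix.head_cons]
    rw [mul_left_comm (fA m b) (Ee R m 1) (Psi R m), mul_psi (fA m b), hfacoe1, hfacoe2,
      mul_add, mul_smul_comm, mul_smul_comm, hXXpsi]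
    abel
  have hcolr : ∀ (i : Fin (m-1)) (ε : Fin 2), ∃ w : AA R m,
      fA m b * colv R m (Sum.inr (i, ε))
        = (∑ k : Fin (m-1), Hm k i • colv R m (Sum.inr (k, ε))) + w * Psi R m := by
    intro i ε
    obtain ⟨c2, hc2⟩ := aeval_psi_decomp (m := m) (hp * Polynomial.X^(i:ℕ))
    refine ⟨![1, Ee R m 1] ε * (c2 + c * (Yy R m)^(i:ℕ)), ?_⟩
    have e1 : (Yy R m)^(i:ℕ) = Polynomial.aeval (Yy R m) (Polynomial.X^(i:ℕ) : Polynomial R) := by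
      rw [map_pow, aeval_X_Yy]
    have hfy : fA m b * (Yy R m)^(i:ℕ)
        = (∑ k : Fin (m-1), Hm k i • (Yy R m)^(k:ℕ))
          + (c2 + c * (Yy R m)^(i:ℕ)) * Psi R m := by
      rw [hfa, add_mul]
      rw [show Polynomial.aeval (Yy R m) hp * (Yy R m)^(i:ℕ)
          = Polynomial.aeval (Yy R m) (hp * Polynomial.X^(i:ℕ)) by rw [map_mul, ← e1]]
      rw [hc2]
      have e2 : ∑ k ∈ Finset.range (m-1),
            ((hp * Polynomial.X^(i:ℕ)) %ₘ (vp R (m-1))).coeff k • (Yy R m)^k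
          = ∑ k : Fin (m-1), Hm k i • (Yy R m)^(k:ℕ) := by
        rw [← Fin.sum_univ_eq_sum_range (fun k =>
          ((hp * Polynomial.X^(i:ℕ)) %ₘ (vp R (m-1))).coeff k • (Yy R m)^k) (m-1)]
        rfl
      rw [e2]
      ring
    simp only [colv, Sum.elim_inr]
    rw [mul_left_comm, hfy, mul_add, Finset.mul_sum]
    congr 1
    · apply Finset.sum_congr rfl
      intro k _
      rw [mul_smul_comm]
    · ring
  choose wfun hw using hcolr
  have hwpair : ∀ (i : Fin (m-1)) (ε : Fin 2), ∃ a0 a1 : R,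
      (wfun i ε) * Psi R m = a0 • colv R m (Sum.inl 0) + a1 • colv R m (Sum.inl 1) := by
    intro i ε
    have hmem := mul_psi_mem (m := m) (wfun i ε)
    unfold Jsp at hmem
    rw [Submodule.mem_span_pair] at hmem
    obtain ⟨a, a', hab⟩ := hmem
    refine ⟨a, a', ?_⟩
    rw [← hab]
    simp [colv]
  choose L0 L1 hL using hwpair
  set D : Matrix (Fin 2 ⊕ (Fin (m-1) × Fin 2)) (Fin 2 ⊕ (Fin (m-1) × Fin 2)) R :=
    Matrix.fromBlocks !![p, q; q, p]
      (Matrix.of fun e (pi : Fin (m-1) × Fin 2) => ![L0 pi.1 pi.2, L1 pi.1 pi.2] e)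
      0
      (Matrix.of fun (pk pi : Fin (m-1) × Fin 2)
        => Hm pk.1 pi.1 * (1 : Matrix (Fin 2) (Fin 2) R) pk.2 pi.2) with hD
  have hcolD : ∀ t, fA m b * colv R m t = ∑ t', D t' t • colv R m t' := by
    intro t
    rw [Fintype.sum_sum_type, Fin.sum_univ_two]
    match t with
    | Sum.inl e =>
      have hz : ∀ pk : Fin (m-1) × Fin 2, D (Sum.inr pk) (Sum.inl e) = 0 := by
        intro pk
        simp [hD, Matrix.fromBlocks_apply₂₁]
      rw [Finset.sum_congr rfl (fun pk _ => by rw [hz pk, zero_smul])]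
      rw [Finset.sum_const_zero, add_zero]
      fin_cases e
      · simpa [hD, Matrix.fromBlocks_apply₁₁] using hcol0
      · simpa [hD, Matrix.fromBlocks_apply₁₁] using hcol1
    | Sum.inr (i, ε) =>
      have hblk : ∀ pk : Fin (m-1) × Fin 2, D (Sum.inr pk) (Sum.inr (i, ε))
          = Hm pk.1 i * (1 : Matrix (Fin 2) (Fin 2) R) pk.2 ε := by
        intro pk
        simp [hD, Matrix.fromBlocks_apply₂₂]
      have hsum2 : ∑ pk : Fin (m-1) × Fin 2,
          D (Sum.inr pk) (Sum.inr (i, ε)) • colv R m (Sum.inr pk)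
          = ∑ k : Fin (m-1), Hm k i • colv R m (Sum.inr (k, ε)) := by
        rw [Fintype.sum_prod_type]
        apply Finset.sum_congr rfl
        intro k _
        rw [Fin.sum_univ_two, hblk (k, 0), hblk (k, 1)]
        fin_cases ε <;> simp [Matrix.one_apply]
      rw [hsum2]
      have hL01 : D (Sum.inl 0) (Sum.inr (i, ε)) = L0 i ε
          ∧ D (Sum.inl 1) (Sum.inr (i, ε)) = L1 i ε := by
        constructor <;> simp [hD, Matrix.fromBlocks_apply₁₂]
      rw [hL01.1, hL01.2, hw i ε, hL i ε]
      abel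
  -- matrices
  set U : Matrix (Fin (2*m)) (Fin 2 ⊕ (Fin (m-1) × Fin 2)) R :=
    Matrix.of (fun x t => (colv R m t).coeff x) with hU
  set M' : Matrix (Fin (2*m)) (Fin (2*m)) R := Matrix.of (fun i j => b (i - j)) with hM'
  have hMU : M' * U = U * D := by
    ext x t
    rw [Matrix.mul_apply, Matrix.mul_apply]
    have lhs : ∑ j, M' x j * U j t = (fA m b * colv R m t).coeff x := by
      rw [fA_mul_apply]
      rfl
    rw [lhs, hcolD t, AddMonoidAlgebra.coeff_sum, Finsupp.finset_sum_apply]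
    apply Finset.sum_congr rfl
    intro t' _
    rw [AddMonoidAlgebra.coeff_smul, Finsupp.smul_apply, smul_eq_mul, mul_comm]
    rfl
  have hsingle : ∀ j : Fin (2*m), ∃ cf : (Fin 2 ⊕ (Fin (m-1) × Fin 2)) → R,
      ∑ t, cf t • colv R m t = AddMonoidAlgebra.single j 1 := by
    intro j
    have hmem : (AddMonoidAlgebra.single j 1 : AA R m)
        ∈ Submodule.span R (Set.range (colv R m)) := by
      rw [span_top]; trivial
    rwa [Submodule.mem_span_range_iff_exists_fun] at hmem
  choose Vf hVf using hsingle
  set V : Matrix (Fin 2 ⊕ (Fin (m-1) × Fin 2)) (Fin (2*m)) R :=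
    Matrix.of (fun t j => Vf j t) with hV
  have hUV : U * V = 1 := by
    ext x j
    rw [Matrix.mul_apply, Matrix.one_apply]
    have : ∑ t, U x t * V t j = (∑ t, Vf j t • colv R m t).coeff x := by
      rw [AddMonoidAlgebra.coeff_sum, Finsupp.finset_sum_apply]
      apply Finset.sum_congr rfl
      intro t _
      rw [AddMonoidAlgebra.coeff_smul, Finsupp.smul_apply, smul_eq_mul, mul_comm]
      rfl
    rw [this, hVf j]
    simp [Finsupp.single_apply, eq_comm]
  have hmge : 1 ≤ m := hm_pos m
  have hcard : Fintype.card (Fin 2 ⊕ (Fin (m-1) × Fin 2)) = Fintype.card (Fin (2*m)) := by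
    simp [Fintype.card_sum, Fintype.card_prod]
    omega
  set e := Fintype.equivOfCardEq hcard with he
  set Us := U.submatrix id ⇑e.symm with hUs
  set Vs := V.submatrix ⇑e.symm id with hVs
  set Ds := D.submatrix ⇑e.symm ⇑e.symm with hDs
  have h1 : M' * Us = Us * Ds := by
    have l : M' * Us = (M' * U).submatrix id ⇑e.symm := by
      ext x y
      simp [Matrix.mul_apply, Matrix.submatrix_apply, hUs]
    have r : Us * Ds = (U * D).submatrix id ⇑e.symm :=
      Matrix.submatrix_mul_equiv U D id e.symm _
    rw [l, r, hMU]
  have h2 : Us * Vs = 1 := by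
    have : Us * Vs = (U * V).submatrix id id :=
      Matrix.submatrix_mul_equiv U V id e.symm id
    rw [this, hUV, Matrix.submatrix_id_id]
  have hdet1 : M'.det * Us.det = Us.det * Ds.det := by
    rw [← Matrix.det_mul, h1, Matrix.det_mul]
  have hdet2 : Us.det * Vs.det = 1 := by
    rw [← Matrix.det_mul, h2, Matrix.det_one]
  have hdetM : M'.det = Ds.det := by
    calc M'.det = M'.det * (Us.det * Vs.det) := by rw [hdet2, mul_one]
    _ = (M'.det * Us.det) * Vs.det := by ring
    _ = (Us.det * Ds.det) * Vs.det := by rw [hdet1]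
    _ = Ds.det * (Us.det * Vs.det) := by ring
    _ = Ds.det := by rw [hdet2, mul_one]
  have hdetD : Ds.det = D.det := Matrix.det_submatrix_equiv_self e.symm D
  have hdetDval : D.det = (p*p - q*q) * (Hm.det)^2 := by
    rw [hD, Matrix.det_fromBlocks_zero₂₁]
    congr 1
    · exact Matrix.det_fin_two_of p q q p
    · have hG : (Matrix.of fun (pk pi : Fin (m-1) × Fin 2)
          => Hm pk.1 pi.1 * (1 : Matrix (Fin 2) (Fin 2) R) pk.2 pi.2)
          = Matrix.kroneckerMap (· * ·) Hm (1 : Matrix (Fin 2) (Fin 2) R) := rfl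
      rw [hG, Matrix.det_kronecker]
      simp
  have htrans : (Matrix.of fun i j : Fin (2*m) => b (j - i)) = M'.transpose := by
    ext i j
    simp [hM', Matrix.transpose_apply]
  refine ⟨Hm.det, ?_⟩
  rw [htrans, Matrix.det_transpose, hdetM, hdetD, hdetDval]
  have hsum1 : ∑ i : Fin (2*m), b i = p + q := by
    rw [hp', hq']
    unfold evenSum oddSum
    exact (Finset.sum_filter_add_sum_filter_not Finset.univ _ b).symm
  have hsum2 : ∑ i : Fin (2*m), (-1:R)^(i:ℕ) * b i = p - q := by
    have step : ∀ i : Fin (2*m), (-1:R)^(i:ℕ) * b i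
        = (if (i:ℕ) % 2 = 0 then b i else - b i) := by
      intro i
      rcases Nat.even_or_odd (i:ℕ) with h | h
      · rw [if_pos (Nat.even_iff.mp h), h.neg_one_pow, one_mul]
      · rw [if_neg (by rw [Nat.odd_iff.mp h]; omega), h.neg_one_pow]
        ring
    rw [Finset.sum_congr rfl (fun i _ => step i), Finset.sum_ite]
    rw [hp', hq']
    unfold evenSum oddSum
    rw [Finset.sum_neg_distrib]
    ring
  rw [hsum1, hsum2]
  ring
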